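/- Let c > 0, α > 0 and β ≥ √2 be real constants, and let ψ : ℝ → ℝ be differentiable. Suppose that for every x ∈ ℝ and every y > 0 one has 0 = ψ'(x)/(β² − 1) + c^{α − 1 + 1/(β²−1)} · (sinh(y/c))^{α−1} · ( −α (cosh(y/c))² + (sinh(y/c))²/(β² − 1) ). Then α = 1, β = √2, and ψ'(x) = c for every x ∈ ℝ. -/

import Mathlib

open Real

/-- Necessity part of the helicoid–catenoid deformation rigidity: if the off-diagonal
metric coefficient of the natural interpolation between the generalised helicoid
`f_hel^{α,ψ}` and the generalised catenoid `f_cat^{β}` vanishes identically, then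
`α = 1`, `β = √2` and `ψ' ≡ c`. -/
theorem helicoid_catenoid_deformation_necessity
    (c α β : ℝ) (hc : 0 < c) (hα : 0 < α) (hβ : Real.sqrt 2 ≤ β)
    (ψ : ℝ → ℝ) (hψ : Differentiable ℝ ψ)
    (h : ∀ x : ℝ, ∀ y : ℝ, 0 < y →
      0 = deriv ψ x / (β ^ 2 - 1) +
        c ^ (α - 1 + 1 / (β ^ 2 - 1)) * (Real.sinh (y / c)) ^ (α - 1) *
          (-α * (Real.cosh (y / c)) ^ 2 + (Real.sinh (y / c)) ^ 2 / (β ^ 2 - 1))) :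
    α = 1 ∧ β = Real.sqrt 2 ∧ ∀ x : ℝ, deriv ψ x = c := by
  have hβ2 : (2 : ℝ) ≤ β ^ 2 := by
    have h2 : Real.sqrt 2 ^ 2 ≤ β ^ 2 :=
      pow_le_pow_left₀ (Real.sqrt_nonneg 2) hβ 2
    rwa [Real.sq_sqrt (by norm_num : (2:ℝ) ≥ 0)] at h2
  set K : ℝ := β ^ 2 - 1 with hKdef
  have hKpos : (0 : ℝ) < K := by simp only [hKdef]; linarith
  set P : ℝ := α - 1 + 1 / K with hPdef
  have hcP : (0 : ℝ) < c ^ P := Real.rpow_pos_of_pos hc P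
  set d : ℝ := deriv ψ 0 with hddef
  set G : ℝ → ℝ := fun s => s ^ (α - 1) * (-α * (1 + s ^ 2) + s ^ 2 / K) with hGdef
  -- G is constant on (0, ∞)
  have hGconst : ∀ s : ℝ, 0 < s → G s = -(d / K) / c ^ P := by
    intro s hs
    have hars : 0 < Real.arsinh s := Real.arsinh_pos_iff.mpr hs
    have hy : 0 < c * Real.arsinh s := mul_pos hc hars
    have hyd : c * Real.arsinh s / c = Real.arsinh s := by
      field_simp
    have h0 := h 0 (c * Real.arsinh s) hy
    rw [hyd, Real.sinh_arsinh, Real.cosh_sq, Real.sinh_arsinh] at h0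
    have hGs : G s = s ^ (α - 1) * (-α * (1 + s ^ 2) + s ^ 2 / K) := rfl
    rw [eq_div_iff hcP.ne']
    have : c ^ P * (s ^ (α - 1) * (-α * (s ^ 2 + 1) + s ^ 2 / K)) = -(d / K) := by
      linarith
    rw [hGs]
    nlinarith [this]
  -- derivative of G vanishes on (0, ∞)
  have hderiv : ∀ s : ℝ, 0 < s →
      (α - 1) * s ^ (α - 1 - 1) * (-α * (1 + s ^ 2) + s ^ 2 / K) +
        s ^ (α - 1) * (-α * (2 * s) + 2 * s / K) = 0 := by
    intro s hs
    have h1 : HasDerivAt (fun t : ℝ => t ^ (α - 1)) ((α - 1) * s ^ (α - 1 - 1)) s :=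
      Real.hasDerivAt_rpow_const (Or.inl hs.ne')
    have hp : HasDerivAt (fun t : ℝ => t ^ 2) (2 * s) s := by
      simpa using hasDerivAt_pow 2 s
    have h2 : HasDerivAt (fun t : ℝ => -α * (1 + t ^ 2) + t ^ 2 / K)
        (-α * (2 * s) + 2 * s / K) s := by
      have := (((hasDerivAt_const s (1 : ℝ)).add hp).const_mul (-α)).add (hp.div_const K)
      rw [show -α * (2 * s) + 2 * s / K = -α * (0 + 2 * s) + 2 * s / K by ring]
      exact this
    have hG' : HasDerivAt G
        ((α - 1) * s ^ (α - 1 - 1) * (-α * (1 + s ^ 2) + s ^ 2 / K) +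
          s ^ (α - 1) * (-α * (2 * s) + 2 * s / K)) s := h1.mul h2
    have hG0 : HasDerivAt G 0 s := by
      have hev : G =ᶠ[nhds s] fun _ => -(d / K) / c ^ P := by
        filter_upwards [eventually_gt_nhds hs] with t ht using hGconst t ht
      exact (hasDerivAt_const s (-(d / K) / c ^ P)).congr_of_eventuallyEq hev
    exact hG'.unique hG0
  -- evaluate at s = 1
  have h1' := hderiv 1 one_pos
  simp only [Real.one_rpow] at h1'
  have e1 : -2 * α ^ 2 + α / K + 1 / K = 0 := by linear_combination h1'
  -- evaluate at s = 2
  have h2' := hderiv 2 two_pos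
  have hsplit : (2 : ℝ) ^ (α - 1) = 2 ^ (α - 1 - 1) * 2 := by
    have hh : (2:ℝ) ^ (α - 1 - 1) * 2 ^ (1:ℝ) = 2 ^ (α - 1) := by
      rw [← Real.rpow_add (by norm_num : (0:ℝ) < 2)]
      norm_num
    rw [← hh, Real.rpow_one]
  rw [hsplit] at h2'
  have hT : (0 : ℝ) < 2 ^ (α - 1 - 1) := Real.rpow_pos_of_pos (by norm_num) _
  have hfac : (2:ℝ) ^ (α - 1 - 1) *
      (-5 * α ^ 2 + 4 * α / K - 3 * α + 4 / K) = 0 := by linear_combination h2'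
  have e2 : -5 * α ^ 2 + 4 * α / K - 3 * α + 4 / K = 0 :=
    (mul_eq_zero.mp hfac).resolve_left hT.ne'
  -- solve for α and K
  have key : -3 * α ^ 2 + 3 * α = 0 := by linear_combination 4 * e1 - e2
  have hα1 : α = 1 := by
    have hz : α * (α - 1) = 0 := by linear_combination (-1/3 : ℝ) * key
    rcases mul_eq_zero.mp hz with h' | h'
    · exact absurd h' hα.ne'
    · linarith
  have hK1 : K = 1 := by
    rw [hα1] at e1
    field_simp at e1
    linarith
  have hβsq : β ^ 2 = 2 := by
    have := hKdef ▸ hK1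
    linarith
  have hβsqrt : β = Real.sqrt 2 := by
    have hβ0 : 0 ≤ β := le_trans (Real.sqrt_nonneg 2) hβ
    rw [← hβsq, Real.sqrt_sq hβ0]
  refine ⟨hα1, hβsqrt, ?_⟩
  intro x
  have hP1 : P = 1 := by rw [hPdef, hα1, hK1]; norm_num
  have hx := h x c hc
  rw [div_self hc.ne', hα1, hK1, hP1, Real.rpow_one, sub_self, Real.rpow_zero] at hx
  have hcs := Real.cosh_sq_sub_sinh_sq 1
  linear_combination (-1 : ℝ) * hx + c * hcs
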